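/- Density increment (q-analog Schönheim bound for (2,1)-blocking sets): define f(n,q) as the minimum size of a set B of 2-dimensional subspaces of F_q^{n+1} such that every 3-dimensional subspace contains a member of B. Then for all 2 ≤ k ≤ n, f(n,q)/[n+1 choose 2]_q ≥ f(k,q)/[k+1 choose 2]_q, where [m choose 2]_q denotes the Gaussian binomial coefficient. -/

import Mathlib

set_option synthInstance.maxHeartbeats 400000
set_option maxHeartbeats 1000000
open Module Submodule
open scoped Classical

variable {F : Type} [Field F] [Fintype F]
variable {V : Type} [AddCommGroup V] [Module F V] [Module.Finite F V]

lemma card_nonzero (W : Submodule F V) :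
    Nat.card {v : V // v ∈ W ∧ v ≠ 0} = Fintype.card F ^ finrank F W - 1 := by
  classical
  have : Finite V := Module.finite_of_finite F
  have : Fintype V := Fintype.ofFinite V
  have e : {v : V // v ∈ W ∧ v ≠ 0} ≃ {x : W // x ≠ 0} :=
    { toFun := fun v => ⟨⟨v.1, v.2.1⟩, fun h => v.2.2 (by simpa using congrArg Subtype.val h)⟩
      invFun := fun x => ⟨x.1.1, x.1.2, fun h => x.2 (by ext; simpa using h)⟩
      left_inv := fun v => rfl
      right_inv := fun x => rfl }
  have h1 : Fintype.card {x : W // x ≠ 0} = Fintype.card W - 1 := by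
    simpa using Fintype.card_subtype_compl (fun x : W => x = 0)
  rw [Nat.card_congr e, Nat.card_eq_fintype_card, h1, card_eq_pow_finrank (K := F) (V := W)]

lemma count_lines (A : Submodule F V) :
    Nat.card {L : Submodule F V // finrank F L = 1 ∧ L ≤ A} * (Fintype.card F - 1)
      = Fintype.card F ^ finrank F A - 1 := by
  classical
  have : Finite V := Module.finite_of_finite F
  have : Fintype V := Fintype.ofFinite V
  have : Fintype (Submodule F V) := Fintype.ofFinite _
  set q := Fintype.card F with hq
  -- the finset of nonzero vectors of A
  set S : Finset V := Finset.univ.filter (fun v => v ∈ A ∧ v ≠ 0) with hS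
  set L : Finset (Submodule F V) :=
    Finset.univ.filter (fun L => finrank F L = 1 ∧ L ≤ A) with hL
  have key : ∀ v ∈ S, Submodule.span F {v} ∈ L := by
    intro v hv
    simp only [hS, Finset.mem_filter, Finset.mem_univ, true_and] at hv
    simp only [hL, Finset.mem_filter, Finset.mem_univ, true_and]
    exact ⟨finrank_span_singleton hv.2, (span_le).2 (by simpa using hv.1)⟩
  have hcard := Finset.card_eq_sum_card_fiberwise key
  have fib : ∀ W ∈ L, (S.filter (fun v => Submodule.span F {v} = W)).card = q - 1 := by
    intro W hW
    simp only [hL, Finset.mem_filter, Finset.mem_univ, true_and] at hW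
    have hfe : (S.filter (fun v => Submodule.span F {v} = W))
        = Finset.univ.filter (fun v => v ∈ W ∧ v ≠ 0) := by
      ext v
      simp only [hS, Finset.mem_filter, Finset.mem_univ, true_and, and_assoc]
      constructor
      · rintro ⟨hvA, hv0, hsp⟩
        exact ⟨hsp ▸ Submodule.mem_span_singleton_self v, hv0⟩
      · rintro ⟨hvW, hv0⟩
        have hle : Submodule.span F {v} ≤ W := (span_le).2 (by simpa using hvW)
        have heq : Submodule.span F {v} = W := by
          apply Submodule.eq_of_le_of_finrank_le hle
          rw [hW.1, finrank_span_singleton hv0]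
        exact ⟨hW.2 hvW, hv0, heq⟩
    rw [hfe]
    have := card_nonzero (F := F) W
    rw [Nat.card_eq_fintype_card, Fintype.card_subtype] at this
    rw [this, hW.1, pow_one]
  have hScard : S.card = q ^ finrank F A - 1 := by
    have := card_nonzero (F := F) A
    rw [Nat.card_eq_fintype_card, Fintype.card_subtype] at this
    exact this
  rw [Finset.sum_congr rfl fib, Finset.sum_const, smul_eq_mul] at hcard
  have hNcard : Nat.card {L : Submodule F V // finrank F L = 1 ∧ L ≤ A} = L.card := by
    rw [Nat.card_eq_fintype_card, Fintype.card_subtype]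
  rw [hNcard, ← hScard, hcard]

lemma finrank_dualAnnihilator' (W : Submodule F V) :
    finrank F W.dualAnnihilator = finrank F V - finrank F W := by
  have h : finrank F (V ⧸ W) = finrank F W.dualAnnihilator :=
    (Subspace.quotEquivAnnihilator W).finrank_eq
  have h2 := Submodule.finrank_quotient_add_finrank W
  omega

lemma card_hyperplanes (T : Submodule F V) :
    Nat.card {H : Submodule F V // finrank F H + 1 = finrank F V ∧ T ≤ H}
      * (Fintype.card F - 1)
    = Fintype.card F ^ (finrank F V - finrank F T) - 1 := by
  have : FiniteDimensional F V := by infer_instance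
  have e : {H : Submodule F V // finrank F H + 1 = finrank F V ∧ T ≤ H} ≃
      {L : Submodule F (Module.Dual F V) // finrank F L = 1 ∧ L ≤ T.dualAnnihilator} :=
    { toFun := fun H => ⟨H.1.dualAnnihilator, by
        rw [finrank_dualAnnihilator']
        have := H.2.1
        omega, Subspace.dualAnnihilator_le_dualAnnihilator_iff.mpr H.2.2⟩
      invFun := fun L => ⟨L.1.dualCoannihilator, by
        have h := Subspace.finrank_add_finrank_dualCoannihilator_eq L.1
        rw [L.2.1] at h
        omega, by
        intro v hv
        rw [Submodule.mem_dualCoannihilator]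
        intro φ hφ
        exact (Submodule.mem_dualAnnihilator φ).mp (L.2.2 hφ) v hv⟩
      left_inv := fun H => Subtype.ext Subspace.dualAnnihilator_dualCoannihilator_eq
      right_inv := fun L => Subtype.ext Subspace.dualCoannihilator_dualAnnihilator_eq }
  rw [Nat.card_congr e, count_lines, finrank_dualAnnihilator']

lemma exists_two_dim_le (S : Submodule F V) (hS : Module.finrank F S = 3) :
    ∃ T : Submodule F V, finrank F T = 2 ∧ T ≤ S := by
  classical
  let b := Module.finBasis F S
  set v : Fin (finrank F S) → V := fun i => (b i : V) with hv
  have li : LinearIndependent F v :=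
    b.linearIndependent.map' S.subtype (Submodule.ker_subtype S)
  have h2 : 2 ≤ finrank F S := by omega
  set g : Fin 2 → Fin (finrank F S) := Fin.castLE h2 with hg
  have li2 : LinearIndependent F (v ∘ g) := li.comp g (Fin.castLE_injective h2)
  refine ⟨Submodule.span F (Set.range (v ∘ g)), ?_, ?_⟩
  · rw [finrank_span_eq_card li2]
    simp
  · rw [Submodule.span_le]
    rintro _ ⟨i, rfl⟩
    exact (b (g i)).2

/-- `fBlock F n` is the minimum size of a set of 2-dimensional subspaces of
`F^(n+1)` such that every 3-dimensional subspace contains a member, i.e. the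
minimum size of a (2,1)-blocking set in `PG(n, |F|)`. -/
noncomputable def fBlock (F : Type) [Field F] [Fintype F] (n : ℕ) : ℕ :=
  sInf {m : ℕ | ∃ B : Finset (Submodule F (Fin (n + 1) → F)),
    B.card = m ∧ (∀ T ∈ B, Module.finrank F T = 2) ∧
    (∀ S : Submodule F (Fin (n + 1) → F), Module.finrank F S = 3 →
      ∃ T ∈ B, T ≤ S)}

lemma fBlock_le (n : ℕ) (B : Finset (Submodule F (Fin (n + 1) → F)))
    (h2 : ∀ T ∈ B, Module.finrank F T = 2)
    (h3 : ∀ S : Submodule F (Fin (n + 1) → F), Module.finrank F S = 3 →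
      ∃ T ∈ B, T ≤ S) : fBlock F n ≤ B.card :=
  Nat.sInf_le ⟨B, rfl, h2, h3⟩

lemma fBlock_spec (n : ℕ) (hn : 2 ≤ n) :
    ∃ B : Finset (Submodule F (Fin (n + 1) → F)), B.card = fBlock F n ∧
      (∀ T ∈ B, Module.finrank F T = 2) ∧
      (∀ S : Submodule F (Fin (n + 1) → F), Module.finrank F S = 3 →
        ∃ T ∈ B, T ≤ S) := by
  classical
  have : Fintype (Submodule F (Fin (n + 1) → F)) := Fintype.ofFinite _
  have hne : {m : ℕ | ∃ B : Finset (Submodule F (Fin (n + 1) → F)),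
      B.card = m ∧ (∀ T ∈ B, Module.finrank F T = 2) ∧
      (∀ S : Submodule F (Fin (n + 1) → F), Module.finrank F S = 3 →
        ∃ T ∈ B, T ≤ S)}.Nonempty := by
    refine ⟨_, Finset.univ.filter (fun T => finrank F T = 2), rfl, ?_, ?_⟩
    · intro T hT
      simpa using hT
    · intro S hS
      obtain ⟨T, hT2, hTle⟩ := exists_two_dim_le S hS
      exact ⟨T, by simpa using hT2, hTle⟩
  obtain ⟨B, h1, h2, h3⟩ := Nat.sInf_mem hne
  exact ⟨B, h1, h2, h3⟩

lemma restrict_block (m : ℕ) (H : Submodule F (Fin (m + 2) → F))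
    (hH : finrank F H = m + 1)
    (B : Finset (Submodule F (Fin (m + 2) → F)))
    (h2 : ∀ T ∈ B, Module.finrank F T = 2)
    (h3 : ∀ S : Submodule F (Fin (m + 2) → F), Module.finrank F S = 3 →
      ∃ T ∈ B, T ≤ S) :
    fBlock F m ≤ (B.filter (fun T => T ≤ H)).card := by
  have he : finrank F H = finrank F (Fin (m + 1) → F) := by
    rw [hH, Module.finrank_fin_fun]
  let e : H ≃ₗ[F] (Fin (m + 1) → F) := LinearEquiv.ofFinrankEq _ _ he
  set B' : Finset (Submodule F (Fin (m + 1) → F)) :=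
    (B.filter (fun T => T ≤ H)).image
      (fun T => Submodule.map (e : H →ₗ[F] (Fin (m + 1) → F)) (Submodule.comap H.subtype T)) with hB'
  have hle : fBlock F m ≤ B'.card := by
    apply fBlock_le
    · intro T' hT'
      simp only [hB', Finset.mem_image, Finset.mem_filter] at hT'
      obtain ⟨T, ⟨hTB, hTH⟩, rfl⟩ := hT'
      exact (LinearEquiv.finrank_map_eq e _).trans
        (((Submodule.comapSubtypeEquivOfLe hTH).finrank_eq).trans (h2 T hTB))
    · intro S' hS'
      set S'' : Submodule F H := Submodule.map (e.symm : (Fin (m + 1) → F) →ₗ[F] H) S' with hS''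
      set S : Submodule F (Fin (m + 2) → F) := Submodule.map H.subtype S'' with hS
      have hrk : finrank F S = 3 :=
        (Submodule.finrank_map_subtype_eq H S'').trans
          ((LinearEquiv.finrank_map_eq e.symm S').trans hS')
      obtain ⟨T, hTB, hTS⟩ := h3 S hrk
      have hTH : T ≤ H := le_trans hTS (Submodule.map_subtype_le H S'')
      refine ⟨Submodule.map (e : H →ₗ[F] (Fin (m + 1) → F)) (Submodule.comap H.subtype T), ?_, ?_⟩
      · simp only [hB', Finset.mem_image, Finset.mem_filter]
        exact ⟨T, ⟨hTB, hTH⟩, rfl⟩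
      · have h1 : Submodule.comap H.subtype T ≤ Submodule.comap H.subtype S :=
          Submodule.comap_mono hTS
        have h2' : Submodule.comap H.subtype S = S'' :=
          Submodule.comap_map_eq_of_injective (Submodule.injective_subtype H) S''
        have h3' : Submodule.map (e : H →ₗ[F] (Fin (m + 1) → F)) S'' = S' := (Submodule.map_symm_eq_iff e).mp rfl
        calc Submodule.map (e : H →ₗ[F] (Fin (m + 1) → F)) (Submodule.comap H.subtype T)
            ≤ Submodule.map (e : H →ₗ[F] (Fin (m + 1) → F)) S'' := Submodule.map_mono (h2' ▸ h1)
          _ = S' := h3'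
  exact hle.trans (Finset.card_image_le)

lemma fBlock_step (m : ℕ) (hm : 2 ≤ m) :
    fBlock F m * (Fintype.card F ^ (m + 2) - 1)
      ≤ fBlock F (m + 1) * (Fintype.card F ^ m - 1) := by
  classical
  set q := Fintype.card F with hq
  obtain ⟨B, hBcard, hB2, hB3⟩ := fBlock_spec (F := F) (m + 1) (by omega)
  have : Fintype (Submodule F (Fin (m + 2) → F)) := Fintype.ofFinite _
  set 𝓗 : Finset (Submodule F (Fin (m + 2) → F)) :=
    Finset.univ.filter (fun H => finrank F H = m + 1) with h𝓗
  have hconv : ∀ T : Submodule F (Fin (m + 2) → F),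
      (𝓗.filter (fun H => T ≤ H)).card * (q - 1)
        = q ^ (m + 2 - finrank F T) - 1 := by
    intro T
    have h := card_hyperplanes (F := F) (V := Fin (m + 2) → F) T
    rw [Module.finrank_fin_fun] at h
    have hc : Nat.card {H : Submodule F (Fin (m + 2) → F) //
        finrank F H + 1 = m + 2 ∧ T ≤ H} = (𝓗.filter (fun H => T ≤ H)).card := by
      rw [Nat.card_eq_fintype_card, Fintype.card_subtype, Finset.filter_filter]
      congr 1
      ext H
      simp only [Finset.mem_filter, Finset.mem_univ, true_and]
      constructor
      · rintro ⟨h1, h2⟩; exact ⟨by omega, h2⟩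
      · rintro ⟨h1, h2⟩; exact ⟨by omega, h2⟩
    rw [hc] at h
    exact h
  have hHcard : 𝓗.card * (q - 1) = q ^ (m + 2) - 1 := by
    have h := hconv ⊥
    rw [Finset.filter_true_of_mem (fun H _ => bot_le)] at h
    simpa using h
  have hcnt : ∀ T ∈ B, (𝓗.filter (fun H => T ≤ H)).card * (q - 1) = q ^ m - 1 := by
    intro T hT
    have h := hconv T
    rw [hB2 T hT] at h
    simpa using h
  have hsum : fBlock F m * 𝓗.card ≤ ∑ H ∈ 𝓗, (B.filter (fun T => T ≤ H)).card := by
    have : ∑ H ∈ 𝓗, fBlock F m ≤ ∑ H ∈ 𝓗, (B.filter (fun T => T ≤ H)).card := by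
      apply Finset.sum_le_sum
      intro H hH
      simp only [h𝓗, Finset.mem_filter, Finset.mem_univ, true_and] at hH
      exact restrict_block m H hH B hB2 hB3
    simpa [Finset.sum_const, mul_comm] using this
  have hswap : ∑ H ∈ 𝓗, (B.filter (fun T => T ≤ H)).card
      = ∑ T ∈ B, (𝓗.filter (fun H => T ≤ H)).card := by
    simp_rw [Finset.card_filter]
    exact Finset.sum_comm
  calc fBlock F m * (q ^ (m + 2) - 1) = fBlock F m * 𝓗.card * (q - 1) := by
        rw [mul_assoc, hHcard]
    _ ≤ (∑ T ∈ B, (𝓗.filter (fun H => T ≤ H)).card) * (q - 1) := by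
        apply Nat.mul_le_mul_right
        rw [← hswap]; exact hsum
    _ = ∑ T ∈ B, (𝓗.filter (fun H => T ≤ H)).card * (q - 1) := by
        rw [Finset.sum_mul]
    _ = ∑ T ∈ B, (q ^ m - 1) := Finset.sum_congr rfl hcnt
    _ = B.card * (q ^ m - 1) := by rw [Finset.sum_const, smul_eq_mul]
    _ = fBlock F (m + 1) * (q ^ m - 1) := by rw [hBcard]

theorem stmt13 (F : Type) [Field F] [Fintype F] (q n k : ℕ)
    (hq : Fintype.card F = q) (hk : 2 ≤ k) (hkn : k ≤ n) :
    fBlock F n * ((q ^ (k + 1) - 1) * (q ^ k - 1)) ≥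
      fBlock F k * ((q ^ (n + 1) - 1) * (q ^ n - 1)) := by
  subst hq
  have hq2 : 1 < Fintype.card F := Fintype.one_lt_card
  set q := Fintype.card F with hqdef
  induction n, hkn using Nat.le_induction with
  | base => exact le_refl _
  | succ n hkn ih =>
    have hP : 0 < q ^ n - 1 := by
      have := Nat.one_lt_pow (by omega : n ≠ 0) hq2
      omega
    have hstep := fBlock_step (F := F) n (le_trans hk hkn)
    rw [ge_iff_le]
    apply Nat.le_of_mul_le_mul_right _ hP
    calc fBlock F k * ((q ^ (n + 1 + 1) - 1) * (q ^ (n + 1) - 1)) * (q ^ n - 1)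
        = (fBlock F k * ((q ^ (n + 1) - 1) * (q ^ n - 1))) * (q ^ (n + 2) - 1) := by
          ring_nf
      _ ≤ (fBlock F n * ((q ^ (k + 1) - 1) * (q ^ k - 1))) * (q ^ (n + 2) - 1) :=
          Nat.mul_le_mul_right _ ih
      _ = (fBlock F n * (q ^ (n + 2) - 1)) * ((q ^ (k + 1) - 1) * (q ^ k - 1)) := by
          ring
      _ ≤ (fBlock F (n + 1) * (q ^ n - 1)) * ((q ^ (k + 1) - 1) * (q ^ k - 1)) :=
          Nat.mul_le_mul_right _ hstep
      _ = fBlock F (n + 1) * ((q ^ (k + 1) - 1) * (q ^ k - 1)) * (q ^ n - 1) := by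
          ring
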